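/- Conversely, MTZ constraints eliminate subtours: if x ∈ {0,1}^{(m+1)×(m+1)} satisfies the degree constraints (each vertex has exactly one outgoing and one incoming selected edge, no self-loops) and there exist reals u_1,...,u_m with u_i − u_j + m·x_{ij} ≤ m − 1 for all distinct i,j ∈ {1,...,m}, then the selected edges form a single directed cycle through all m+1 vertices (there is no directed cycle among the selected edges avoiding vertex 0). -/
import Mathlib


open Finset

/-- MTZ constraints eliminate subtours.  If `x` is a binary
matrix on `{0,…,m}` satisfying the degree constraints (each vertex has exactly
one selected outgoing and one selected incoming edge, and no self-loops), and
there are reals `u_1,…,u_m` with `u i − u j + m·x i j ≤ m − 1` for all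
distinct `i, j ≠ 0`, then there is no directed cycle among the selected edges
avoiding vertex `0` (hence the selected edges form a single directed cycle
through all `m+1` vertices). -/
theorem mtz_eliminates_subtours (m : ℕ) (x : Fin (m + 1) → Fin (m + 1) → ℝ)
    (hbin : ∀ i j, x i j = 0 ∨ x i j = 1)
    (hout : ∀ i, ∑ j : Fin (m + 1), x i j = 1)
    (hin : ∀ i, ∑ j : Fin (m + 1), x j i = 1)
    (hloop : ∀ i, x i i = 0)
    (u : Fin (m + 1) → ℝ)
    (hmtz : ∀ i j : Fin (m + 1), i ≠ 0 → j ≠ 0 → i ≠ j →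
      u i - u j + (m : ℝ) * x i j ≤ (m : ℝ) - 1) :
    ¬ ∃ (k : ℕ) (c : Fin (k + 1) → Fin (m + 1)),
        Function.Injective c ∧ (∀ t, c t ≠ 0) ∧
        (∀ t : Fin (k + 1), x (c t) (c (t + 1)) = 1) := by
  rintro ⟨k, c, hinj, hne0, hsel⟩
  rcases Nat.eq_zero_or_pos k with rfl | hk
  · have := hsel 0
    simp only [show (0 : Fin 1) + 1 = 0 from rfl] at this
    rw [hloop] at this; norm_num at this
  · have hstep : ∀ t : Fin (k + 1), c t ≠ c (t + 1) := by
      intro t h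
      have : t = t + 1 := hinj h
      have h1 : (1 : Fin (k+1)) = 0 := left_eq_add.mp this
      rw [Fin.ext_iff, Fin.val_one'] at h1
      simp at h1
      omega
    have key : ∀ t : Fin (k + 1),
        u (c t) - u (c (t + 1)) + (m : ℝ) * x (c t) (c (t+1)) ≤ (m : ℝ) - 1 :=
      fun t => hmtz _ _ (hne0 t) (hne0 (t+1)) (hstep t)
    have hsum := Finset.sum_le_sum (fun t (_ : t ∈ Finset.univ) => key t)
    have htel : ∑ t : Fin (k+1), u (c (t + 1)) = ∑ t : Fin (k+1), u (c t) :=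
      Fintype.sum_equiv (Equiv.addRight 1) _ _ (fun t => rfl)
    rw [Finset.sum_add_distrib, Finset.sum_sub_distrib, htel, sub_self, zero_add] at hsum
    simp only [hsel, mul_one, Finset.sum_const, Finset.card_univ, Fintype.card_fin,
      nsmul_eq_mul] at hsum
    have : (0:ℝ) < (k+1 : ℕ) := by positivity
    nlinarith [hsum]
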